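/- Assume that ω ↦ log‖A₁(ω)‖ is integrable with E[log‖A₁‖] < 0, and that E[log⁺‖B₁‖] < ∞; let U := Σ_{k=0}^{∞} (A₁ ⋯ A_k) B_{k+1} (the almost surely convergent backward series). Let Y₀ be any random vector in ℝ^q independent of the whole sequence ((A_k, B_k))_{k≥1}, and define Y_m := A_m Y_{m−1} + B_m for m ≥ 1. Then the distribution of Y_m converges weakly to the distribution of U as m → ∞. -/

import Mathlib

open MeasureTheory ProbabilityTheory Filter
open scoped NNReal Topology BoundedContinuousFunction

/-- The ordered composition `A s ω ∘ A (s+1) ω ∘ ⋯ ∘ A (s+k-1) ω` of random continuous linear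
maps on Euclidean space (the identity when `k = 0`). -/
noncomputable def fwdProd {Ω : Type*} {q : ℕ}
    (A : ℕ → Ω → (EuclideanSpace ℝ (Fin q) →L[ℝ] EuclideanSpace ℝ (Fin q)))
    (s k : ℕ) (ω : Ω) : EuclideanSpace ℝ (Fin q) →L[ℝ] EuclideanSpace ℝ (Fin q) :=
  ((List.range k).map (fun i => A (s + i) ω)).prod

section Aux

variable {Ω : Type*} {q : ℕ}
  (A : ℕ → Ω → (EuclideanSpace ℝ (Fin q) →L[ℝ] EuclideanSpace ℝ (Fin q)))
  (B : ℕ → Ω → EuclideanSpace ℝ (Fin q))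

lemma fwdProd_zero (s : ℕ) (ω : Ω) : fwdProd A s 0 ω = 1 := rfl

lemma fwdProd_succ (s k : ℕ) (ω : Ω) :
    fwdProd A s (k + 1) ω = fwdProd A s k ω * A (s + k) ω := by
  unfold fwdProd
  rw [List.range_succ, List.map_append, List.prod_append]
  simp

lemma norm_fwdProd_le (hE : Nontrivial (EuclideanSpace ℝ (Fin q))) (s n : ℕ) (ω : Ω) :
    ‖fwdProd A s n ω‖ ≤ ∏ i ∈ Finset.range n, ‖A (s + i) ω‖ := by
  induction n with
  | zero => simp [fwdProd_zero]
  | succ n ih =>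
    rw [fwdProd_succ, Finset.prod_range_succ]
    refine (norm_mul_le _ _).trans ?_
    exact mul_le_mul_of_nonneg_right ih (norm_nonneg _)

lemma foldl_ofFn_rev (s m : ℕ) (ω : Ω) (y : EuclideanSpace ℝ (Fin q)) :
    List.foldl (fun (y : EuclideanSpace ℝ (Fin q))
        (p : (EuclideanSpace ℝ (Fin q) →L[ℝ] EuclideanSpace ℝ (Fin q)) × EuclideanSpace ℝ (Fin q))
        => p.1 y + p.2) y
      (List.ofFn (fun i : Fin m => (A (s + m - i) ω, B (s + m - i) ω)))
      = (∑ k ∈ Finset.range m, fwdProd A (s + 1) k ω (B (s + k + 1) ω))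
        + fwdProd A (s + 1) m ω y := by
  induction m generalizing y with
  | zero => simp [fwdProd_zero]
  | succ m ih =>
    rw [List.ofFn_succ]
    have h0 : s + (m + 1) - ((0 : Fin (m+1)) : ℕ) = s + m + 1 := by
      simp only [Fin.val_zero, Nat.sub_zero]; omega
    have htail : (fun i : Fin m => ((A (s + (m+1) - (i.succ : Fin (m+1))) ω,
        B (s + (m+1) - (i.succ : Fin (m+1))) ω))) =
        fun i : Fin m => (A (s + m - i) ω, B (s + m - i) ω) := by
      funext i
      have : s + (m + 1) - ((i.succ : Fin (m+1)) : ℕ) = s + m - i := by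
        simp [Fin.val_succ]; omega
      rw [this]
    rw [List.foldl_cons]
    simp only [h0, htail]
    rw [ih]
    rw [Finset.sum_range_succ, fwdProd_succ]
    have hidx : s + 1 + m = s + m + 1 := by omega
    rw [hidx]
    simp only [map_add, ContinuousLinearMap.mul_apply]
    abel

lemma foldl_ofFn_fwd (Y₀ : Ω → EuclideanSpace ℝ (Fin q))
    (Y : ℕ → Ω → EuclideanSpace ℝ (Fin q)) (hY0 : Y 0 = Y₀)
    (hYrec : ∀ m : ℕ, Y (m + 1) = fun ω => A (m + 1) ω (Y m ω) + B (m + 1) ω)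
    (m : ℕ) (ω : Ω) :
    Y m ω = List.foldl (fun (y : EuclideanSpace ℝ (Fin q))
        (p : (EuclideanSpace ℝ (Fin q) →L[ℝ] EuclideanSpace ℝ (Fin q)) × EuclideanSpace ℝ (Fin q))
        => p.1 y + p.2) (Y₀ ω)
      (List.ofFn (fun i : Fin m => (A ((i : ℕ) + 1) ω, B ((i : ℕ) + 1) ω))) := by
  induction m with
  | zero => simp [hY0]
  | succ m ih =>
    rw [List.ofFn_succ']
    simp only [Fin.coe_castSucc, Fin.val_last]
    rw [List.concat_eq_append, List.foldl_append]
    simp only [List.foldl_cons, List.foldl_nil]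
    rw [← ih, hYrec]

/-- The map describing `m` steps of the affine recursion, as a function of the starting point
and the `m` coefficient pairs. -/
noncomputable def recFun (q : ℕ) (m : ℕ)
    (z : (EuclideanSpace ℝ (Fin q)) ×
      (Fin m → ((EuclideanSpace ℝ (Fin q) →L[ℝ] EuclideanSpace ℝ (Fin q)) ×
        EuclideanSpace ℝ (Fin q)))) : EuclideanSpace ℝ (Fin q) :=
  List.foldl (fun (y : EuclideanSpace ℝ (Fin q))
      (p : (EuclideanSpace ℝ (Fin q) →L[ℝ] EuclideanSpace ℝ (Fin q)) × EuclideanSpace ℝ (Fin q))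
      => p.1 y + p.2) z.1 (List.ofFn z.2)

lemma continuous_recFun (m : ℕ) : Continuous (recFun q m) := by
  induction m with
  | zero =>
    have h0 : recFun q 0 = Prod.fst := funext fun z => by simp [recFun]
    rw [h0]; exact continuous_fst
  | succ m ih =>
    have heq : recFun q (m + 1) = (recFun q m) ∘
        (fun z => ((z.2 0).1 z.1 + (z.2 0).2, fun i : Fin m => z.2 i.succ)) := by
      funext z
      simp [recFun, List.ofFn_succ]
    rw [heq]
    apply ih.comp
    apply Continuous.prodMk
    · have happ : Continuous (fun p :
          (EuclideanSpace ℝ (Fin q) →L[ℝ] EuclideanSpace ℝ (Fin q)) × EuclideanSpace ℝ (Fin q) =>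
          p.1 p.2) := isBoundedBilinearMap_apply.continuous
      exact (happ.comp (((continuous_apply 0).comp continuous_snd).fst.prodMk
        continuous_fst)).add (((continuous_apply 0).comp continuous_snd).snd)
    · exact continuous_pi fun i => (continuous_apply i.succ).comp continuous_snd

end Aux

set_option maxHeartbeats 1600000 in
set_option synthInstance.maxHeartbeats 1000000 in
/-- Convergence in distribution of the random recurrence `Y_m = A_m Y_{m-1} + B_m` to the
backward series `U = Σ_{k≥0} (A₁ ⋯ A_k) B_{k+1}`, for an i.i.d. sequence `((A_k, B_k))_{k≥1}`
with `E[log ‖A₁‖] < 0` and `E[log⁺ ‖B₁‖] < ∞`, started from any `Y₀` independent of the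
sequence.  Convergence in distribution is expressed by testing against all bounded continuous
functions. -/
theorem affine_recurrence_tendsto_in_distribution
    {Ω : Type*} [MeasureSpace Ω] [IsProbabilityMeasure (ℙ : Measure Ω)]
    {q : ℕ} (hq : 1 ≤ q)
    [MeasurableSpace (EuclideanSpace ℝ (Fin q) →L[ℝ] EuclideanSpace ℝ (Fin q))]
    [BorelSpace (EuclideanSpace ℝ (Fin q) →L[ℝ] EuclideanSpace ℝ (Fin q))]
    (A : ℕ → Ω → (EuclideanSpace ℝ (Fin q) →L[ℝ] EuclideanSpace ℝ (Fin q)))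
    (B : ℕ → Ω → EuclideanSpace ℝ (Fin q))
    (hAmeas : ∀ k : ℕ, Measurable (A (k + 1)))
    (hBmeas : ∀ k : ℕ, Measurable (B (k + 1)))
    (hiid : iIndepFun
      (fun (k : ℕ) ω => (A (k + 1) ω, B (k + 1) ω)) ℙ)
    (hident : ∀ k : ℕ, IdentDistrib (fun ω => (A (k + 1) ω, B (k + 1) ω))
      (fun ω => (A 1 ω, B 1 ω)) ℙ ℙ)
    (hlogA_int : Integrable (fun ω => Real.log ‖A 1 ω‖) ℙ)
    (hlogA_neg : ∫ ω, Real.log ‖A 1 ω‖ ∂ℙ < 0)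
    (hlogB_int : Integrable (fun ω => Real.log (max 1 ‖B 1 ω‖)) ℙ)
    (Y₀ : Ω → EuclideanSpace ℝ (Fin q)) (hY₀meas : Measurable Y₀)
    (hY₀indep : IndepFun Y₀ (fun ω (k : ℕ) => (A (k + 1) ω, B (k + 1) ω)) ℙ)
    (Y : ℕ → Ω → EuclideanSpace ℝ (Fin q)) (hY0 : Y 0 = Y₀)
    (hYrec : ∀ m : ℕ, Y (m + 1) = fun ω => A (m + 1) ω (Y m ω) + B (m + 1) ω) :
    ∀ f : EuclideanSpace ℝ (Fin q) →ᵇ ℝ,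
      Tendsto (fun m => ∫ ω, f (Y m ω) ∂ℙ) atTop
        (𝓝 (∫ ω, f (∑' k : ℕ, (fwdProd A 1 k ω) (B (k + 1) ω)) ∂ℙ)) := by
  classical
  intro f
  haveI : Nonempty (Fin q) := ⟨⟨0, hq⟩⟩
  haveI hnt : Nontrivial (EuclideanSpace ℝ (Fin q)) := by
    refine nontrivial_of_ne (EuclideanSpace.single (⟨0, hq⟩ : Fin q) (1 : ℝ)) 0 ?_
    intro h
    have h1 := congrArg norm h
    rw [EuclideanSpace.norm_single, norm_zero] at h1
    norm_num at h1
  set X : ℕ → Ω → ((EuclideanSpace ℝ (Fin q) →L[ℝ] EuclideanSpace ℝ (Fin q)) ×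
      EuclideanSpace ℝ (Fin q)) := fun k ω => (A (k + 1) ω, B (k + 1) ω) with hX_def
  have hXmeas : ∀ k, Measurable (X k) := fun k => (hAmeas k).prodMk (hBmeas k)
  have hident' : ∀ k, IdentDistrib (X k) (X 0) ℙ ℙ := fun k =>
    (hident k).trans (hident 0).symm
  -- the common law of the pairs
  set μP : Measure ((EuclideanSpace ℝ (Fin q) →L[ℝ] EuclideanSpace ℝ (Fin q)) ×
      EuclideanSpace ℝ (Fin q)) := Measure.map (X 0) ℙ with hμP_def
  haveI : IsProbabilityMeasure μP := Measure.isProbabilityMeasure_map (hXmeas 0).aemeasurable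
  haveI hsf : SigmaFinite μP := inferInstance
  have hmapX : ∀ j, Measure.map (X j) ℙ = μP := fun j => (hident' j).map_eq
  -- the law of any injectively-indexed tuple of the pairs is the product law
  have hpi : ∀ (m : ℕ) (σ : Fin m → ℕ), Function.Injective σ →
      Measure.map (fun ω (i : Fin m) => X (σ i) ω) ℙ = Measure.pi (fun _ => μP) := by
    intro m σ hσ
    have hVmeas : Measurable (fun ω (i : Fin m) => X (σ i) ω) :=
      measurable_pi_lambda _ fun i => hXmeas (σ i)
    refine (Measure.pi_eq fun s hs => ?_).symm
    rw [Measure.map_apply hVmeas (MeasurableSet.univ_pi hs)]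
    have hpre : (fun ω (i : Fin m) => X (σ i) ω) ⁻¹' (Set.pi Set.univ s)
        = ⋂ i, X (σ i) ⁻¹' s i := by
      ext ω
      simp [Set.mem_univ_pi]
    rw [hpre]
    set t : ℕ → Set ((EuclideanSpace ℝ (Fin q) →L[ℝ] EuclideanSpace ℝ (Fin q)) ×
        EuclideanSpace ℝ (Fin q)) :=
      fun j => if h : ∃ i, σ i = j then s h.choose else Set.univ with ht_def
    have htσ : ∀ i, t (σ i) = s i := by
      intro i
      have hex : ∃ i', σ i' = σ i := ⟨i, rfl⟩
      simp only [ht_def, dif_pos hex]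
      exact congrArg s (hσ hex.choose_spec)
    have hts : ∀ j, MeasurableSet (t j) := by
      intro j
      simp only [ht_def]
      split_ifs with h
      · exact hs _
      · exact MeasurableSet.univ
    have key := hiid.measure_inter_preimage_eq_mul (Finset.univ.image σ) (fun j _ => hts j)
    have h1 : (⋂ j ∈ Finset.univ.image σ, X j ⁻¹' t j) = ⋂ i, X (σ i) ⁻¹' s i := by
      rw [Finset.set_biInter_finset_image]
      simp [htσ]
    have h2 : (∏ j ∈ Finset.univ.image σ, ℙ (X j ⁻¹' t j)) = ∏ i, μP (s i) := by
      rw [Finset.prod_image (fun i _ j _ h => hσ h)]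
      refine Finset.prod_congr rfl fun i _ => ?_
      rw [htσ, ← hmapX (σ i), Measure.map_apply (hXmeas (σ i)) (hs i)]
    rw [h1, h2] at key
    exact key
  -- the joint law of `Y₀` and a tuple of pairs
  have hpairmeas : ∀ (m : ℕ) (σ : Fin m → ℕ),
      Measurable (fun ω => (Y₀ ω, fun i : Fin m => X (σ i) ω)) := fun m σ =>
    hY₀meas.prodMk (measurable_pi_lambda _ fun i => hXmeas (σ i))
  have hjoint : ∀ (m : ℕ) (σ : Fin m → ℕ), Function.Injective σ →
      Measure.map (fun ω => (Y₀ ω, fun i : Fin m => X (σ i) ω)) ℙ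
        = (Measure.map Y₀ ℙ).prod (Measure.pi fun _ : Fin m => μP) := by
    intro m σ hσ
    have hVmeas : Measurable (fun ω (i : Fin m) => X (σ i) ω) :=
      measurable_pi_lambda _ fun i => hXmeas (σ i)
    have hind : IndepFun Y₀ (fun ω (i : Fin m) => X (σ i) ω) ℙ := by
      have h := hY₀indep.comp (φ := id)
        (ψ := fun (g : ℕ → ((EuclideanSpace ℝ (Fin q) →L[ℝ] EuclideanSpace ℝ (Fin q)) ×
          EuclideanSpace ℝ (Fin q))) (i : Fin m) => g (σ i)) measurable_id
        (measurable_pi_lambda _ fun i => measurable_pi_apply (σ i))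
      exact h
    rw [(indepFun_iff_map_prod_eq_prod_map_map hY₀meas.aemeasurable hVmeas.aemeasurable).mp hind,
      hpi m σ hσ]
  -- representations of `Y m` and of the reversed recursion `Z m` through `recFun`
  set Z : ℕ → Ω → EuclideanSpace ℝ (Fin q) := fun m ω =>
    (∑ k ∈ Finset.range m, fwdProd A 1 k ω (B (k + 1) ω)) + fwdProd A 1 m ω (Y₀ ω) with hZ_def
  have hmeasg : ∀ m : ℕ, Measurable (recFun q m) := by
    intro m
    haveI h1 : SecondCountableTopology ((EuclideanSpace ℝ (Fin q) →L[ℝ]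
        EuclideanSpace ℝ (Fin q)) × EuclideanSpace ℝ (Fin q)) := inferInstance
    haveI h2 : OpensMeasurableSpace (Fin m → (EuclideanSpace ℝ (Fin q) →L[ℝ]
        EuclideanSpace ℝ (Fin q)) × EuclideanSpace ℝ (Fin q)) := Pi.opensMeasurableSpace
    haveI h3 : OpensMeasurableSpace (EuclideanSpace ℝ (Fin q) ×
        (Fin m → (EuclideanSpace ℝ (Fin q) →L[ℝ] EuclideanSpace ℝ (Fin q)) ×
          EuclideanSpace ℝ (Fin q))) := Prod.opensMeasurableSpace
    exact (continuous_recFun m).measurable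
  have hYrep : ∀ m, Y m = fun ω => recFun q m (Y₀ ω, fun i : Fin m => X (i : ℕ) ω) := by
    intro m
    funext ω
    exact foldl_ofFn_fwd A B Y₀ Y hY0 hYrec m ω
  have hZrep : ∀ m, Z m = fun ω =>
      recFun q m (Y₀ ω, fun i : Fin m => X (m - 1 - (i : ℕ)) ω) := by
    intro m
    funext ω
    have hfn : (fun i : Fin m => X (m - 1 - (i : ℕ)) ω)
        = fun i : Fin m => (A (m - (i : ℕ)) ω, B (m - (i : ℕ)) ω) := by
      funext i
      have hi : (i : ℕ) < m := i.isLt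
      have hnat : m - (i : ℕ) = (m - 1 - (i : ℕ)) + 1 := by omega
      rw [hX_def, hnat]
    have := foldl_ofFn_rev A B 0 m ω (Y₀ ω)
    simp only [Nat.zero_add] at this
    rw [hZ_def]
    simp only
    rw [recFun, hfn]
    exact this.symm
  have hYmeas : ∀ m, Measurable (Y m) := fun m => by
    rw [hYrep m]; exact (hmeasg m).comp (hpairmeas m _)
  have hZmeas : ∀ m, Measurable (Z m) := fun m => by
    rw [hZrep m]; exact (hmeasg m).comp (hpairmeas m _)
  -- `Y m` and `Z m` have the same law
  have hmapeq : ∀ m, Measure.map (Y m) ℙ = Measure.map (Z m) ℙ := by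
    intro m
    have hσf : Function.Injective (fun i : Fin m => (i : ℕ)) := Fin.val_injective
    have hσr : Function.Injective (fun i : Fin m => m - 1 - (i : ℕ)) := by
      intro i j h
      have hi := i.isLt
      have hj := j.isLt
      simp only at h
      exact Fin.ext (by omega)
    rw [hYrep m, hZrep m,
      show (fun ω => recFun q m (Y₀ ω, fun i : Fin m => X (i : ℕ) ω))
        = recFun q m ∘ (fun ω => (Y₀ ω, fun i : Fin m => X (i : ℕ) ω)) from rfl,
      show (fun ω => recFun q m (Y₀ ω, fun i : Fin m => X (m - 1 - (i : ℕ)) ω))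
        = recFun q m ∘ (fun ω => (Y₀ ω, fun i : Fin m => X (m - 1 - (i : ℕ)) ω)) from rfl,
      ← Measure.map_map (hmeasg m) (hpairmeas m _),
      ← Measure.map_map (hmeasg m) (hpairmeas m _),
      hjoint m _ hσf, hjoint m _ hσr]
  have hint_eq : ∀ m, ∫ ω, f (Y m ω) ∂ℙ = ∫ ω, f (Z m ω) ∂ℙ := by
    intro m
    rw [← integral_map (hYmeas m).aemeasurable f.continuous.aestronglyMeasurable,
      hmapeq m, integral_map (hZmeas m).aemeasurable f.continuous.aestronglyMeasurable]
  -- strong law of large numbers for the logs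
  set L : ℕ → Ω → ℝ := fun n ω => Real.log ‖A (n + 1) ω‖ with hL_def
  set M : ℕ → Ω → ℝ := fun n ω => Real.log (max 1 ‖B (n + 1) ω‖) with hM_def
  have hφA : Measurable (fun p : ((EuclideanSpace ℝ (Fin q) →L[ℝ] EuclideanSpace ℝ (Fin q)) ×
      EuclideanSpace ℝ (Fin q)) => Real.log ‖p.1‖) :=
    Real.measurable_log.comp measurable_fst.norm
  have hφB : Measurable (fun p : ((EuclideanSpace ℝ (Fin q) →L[ℝ] EuclideanSpace ℝ (Fin q)) ×
      EuclideanSpace ℝ (Fin q)) => Real.log (max 1 ‖p.2‖)) :=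
    Real.measurable_log.comp (measurable_const.max measurable_snd.norm)
  have hLindep : Pairwise (Function.onFun (IndepFun · · ℙ) L) := fun i j hij =>
    (hiid.indepFun hij).comp hφA hφA
  have hMindep : Pairwise (Function.onFun (IndepFun · · ℙ) M) := fun i j hij =>
    (hiid.indepFun hij).comp hφB hφB
  have hLident : ∀ i, IdentDistrib (L i) (L 0) ℙ ℙ := fun i => (hident' i).comp hφA
  have hMident : ∀ i, IdentDistrib (M i) (M 0) ℙ ℙ := fun i => (hident' i).comp hφB
  have hLint : Integrable (L 0) ℙ := hlogA_int
  have hMint : Integrable (M 0) ℙ := hlogB_int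
  have hSLLN_A := strong_law_ae L hLint hLindep hLident
  have hSLLN_B := strong_law_ae M hMint hMindep hMident
  set μ0 : ℝ := ∫ ω, Real.log ‖A 1 ω‖ ∂ℙ with hμ0_def
  have hμ0neg : μ0 < 0 := hlogA_neg
  -- almost sure convergence of `Z m` to the backward series
  have hae : ∀ᵐ ω ∂ℙ, Tendsto (fun m => Z m ω) atTop
      (𝓝 (∑' k : ℕ, (fwdProd A 1 k ω) (B (k + 1) ω))) := by
    filter_upwards [hSLLN_A, hSLLN_B] with ω hω1 hω2
    have hA' : Tendsto (fun n : ℕ => (n : ℝ)⁻¹ * ∑ i ∈ Finset.range n, L i ω) atTop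
        (𝓝 μ0) := by
      simpa [smul_eq_mul] using hω1
    have hB' : Tendsto (fun n : ℕ => (n : ℝ)⁻¹ * ∑ i ∈ Finset.range n, M i ω) atTop
        (𝓝 (∫ a, M 0 a ∂ℙ)) := by
      simpa [smul_eq_mul] using hω2
    -- eventual bound on the partial sums of `L`
    have h1 : ∀ᶠ n : ℕ in atTop, (n : ℝ)⁻¹ * (∑ i ∈ Finset.range n, L i ω) < μ0 / 2 :=
      (tendsto_order.1 hA').2 _ (by linarith)
    have hS : ∀ᶠ n : ℕ in atTop, (∑ i ∈ Finset.range n, L i ω) ≤ (n : ℝ) * (μ0 / 2) := by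
      filter_upwards [h1, eventually_ge_atTop 1] with n hn hn1
      have hn0 : (0 : ℝ) < n := by
        have h : (0 : ℕ) < n := hn1
        exact_mod_cast h
      have h2 := mul_le_mul_of_nonneg_left hn.le hn0.le
      calc (∑ i ∈ Finset.range n, L i ω)
          = (n : ℝ) * ((n : ℝ)⁻¹ * ∑ i ∈ Finset.range n, L i ω) := by
            field_simp
        _ ≤ (n : ℝ) * (μ0 / 2) := h2
    -- the increments of the partial sums of `M` are eventually small
    have haT' : Tendsto (fun n : ℕ => ((n + 1 : ℕ) : ℝ)⁻¹ * ∑ i ∈ Finset.range (n + 1), M i ω)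
        atTop (𝓝 (∫ a, M 0 a ∂ℙ)) := hB'.comp (tendsto_add_atTop_nat 1)
    have hrr : Tendsto (fun n : ℕ => (1 : ℝ) + (n : ℝ)⁻¹) atTop (𝓝 1) := by
      simpa using tendsto_const_nhds.add (tendsto_inv_atTop_nhds_zero_nat (𝕜 := ℝ))
    have hmul := haT'.mul hrr
    rw [mul_one] at hmul
    have heq : ∀ᶠ n : ℕ in atTop,
        (((n + 1 : ℕ) : ℝ)⁻¹ * ∑ i ∈ Finset.range (n + 1), M i ω) * ((1 : ℝ) + (n : ℝ)⁻¹)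
          = (n : ℝ)⁻¹ * ∑ i ∈ Finset.range (n + 1), M i ω := by
      filter_upwards [eventually_ge_atTop 1] with n hn1
      have hn0 : (n : ℝ) ≠ 0 := by
        have h : (0 : ℕ) < n := hn1
        exact_mod_cast h.ne'
      push_cast
      field_simp
    have hT' : Tendsto (fun n : ℕ => (n : ℝ)⁻¹ * ∑ i ∈ Finset.range (n + 1), M i ω) atTop
        (𝓝 (∫ a, M 0 a ∂ℙ)) := Tendsto.congr' heq hmul
    have hdiff : Tendsto (fun n : ℕ => (n : ℝ)⁻¹ * M n ω) atTop (𝓝 0) := by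
      have h := hT'.sub hB'
      rw [sub_self] at h
      refine h.congr (fun n => ?_)
      rw [Finset.sum_range_succ]
      ring
    have h3 : ∀ᶠ n : ℕ in atTop, (n : ℝ)⁻¹ * M n ω < -(μ0 / 4) :=
      (tendsto_order.1 hdiff).2 _ (by linarith)
    have hMb : ∀ᶠ n : ℕ in atTop, M n ω ≤ (n : ℝ) * (-(μ0 / 4)) := by
      filter_upwards [h3, eventually_ge_atTop 1] with n hn hn1
      have hn0 : (0 : ℝ) < n := by
        have h : (0 : ℕ) < n := hn1
        exact_mod_cast h
      have h2 := mul_le_mul_of_nonneg_left hn.le hn0.le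
      calc M n ω = (n : ℝ) * ((n : ℝ)⁻¹ * M n ω) := by field_simp
        _ ≤ (n : ℝ) * (-(μ0 / 4)) := h2
    -- pointwise norm bounds
    have hbound : ∀ n : ℕ, ‖fwdProd A 1 n ω‖ ≤ Real.exp (∑ i ∈ Finset.range n, L i ω) := by
      intro n
      refine (norm_fwdProd_le A hnt 1 n ω).trans ?_
      have hle : ∏ i ∈ Finset.range n, ‖A (1 + i) ω‖
          ≤ ∏ i ∈ Finset.range n, Real.exp (L i ω) := by
        refine Finset.prod_le_prod (fun i _ => norm_nonneg _) (fun i _ => ?_)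
        have h := Real.le_exp_log (x := ‖A (i + 1) ω‖)
        rw [Nat.add_comm 1 i]
        exact h
      exact hle.trans (le_of_eq (Real.exp_sum _ _).symm)
    have hBexp : ∀ n : ℕ, ‖B (n + 1) ω‖ ≤ Real.exp (M n ω) := by
      intro n
      have h1' : (0 : ℝ) < max 1 ‖B (n + 1) ω‖ := lt_of_lt_of_le zero_lt_one (le_max_left _ _)
      have h2' : Real.exp (M n ω) = max 1 ‖B (n + 1) ω‖ := Real.exp_log h1'
      rw [h2']
      exact le_max_right _ _
    have hterm : ∀ᶠ n : ℕ in atTop,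
        ‖fwdProd A 1 n ω (B (n + 1) ω)‖ ≤ Real.exp (μ0 / 4) ^ n := by
      filter_upwards [hS, hMb] with n hSn hMn
      calc ‖fwdProd A 1 n ω (B (n + 1) ω)‖
          ≤ ‖fwdProd A 1 n ω‖ * ‖B (n + 1) ω‖ := ContinuousLinearMap.le_opNorm _ _
        _ ≤ Real.exp (∑ i ∈ Finset.range n, L i ω) * Real.exp (M n ω) :=
            mul_le_mul (hbound n) (hBexp n) (norm_nonneg _) (Real.exp_nonneg _)
        _ = Real.exp ((∑ i ∈ Finset.range n, L i ω) + M n ω) := (Real.exp_add _ _).symm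
        _ ≤ Real.exp ((n : ℝ) * (μ0 / 2) + (n : ℝ) * (-(μ0 / 4))) :=
            Real.exp_le_exp.2 (add_le_add hSn hMn)
        _ = Real.exp (μ0 / 4) ^ n := by
            rw [← Real.exp_nat_mul]
            congr 1
            ring
    have hsummable : Summable (fun n : ℕ => fwdProd A 1 n ω (B (n + 1) ω)) := by
      refine Summable.of_norm_bounded_eventually (g := fun n => Real.exp (μ0 / 4) ^ n)
        (summable_geometric_of_lt_one (Real.exp_nonneg _)
          (Real.exp_lt_one_iff.2 (by linarith))) ?_
      rwa [Nat.cofinite_eq_atTop]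
    have hpart := hsummable.hasSum.tendsto_sum_nat
    have hrem : Tendsto (fun m : ℕ => fwdProd A 1 m ω (Y₀ ω)) atTop (𝓝 0) := by
      apply squeeze_zero_norm' (a := fun n : ℕ => Real.exp (μ0 / 2) ^ n * ‖Y₀ ω‖)
      · filter_upwards [hS] with n hSn
        calc ‖fwdProd A 1 n ω (Y₀ ω)‖
            ≤ ‖fwdProd A 1 n ω‖ * ‖Y₀ ω‖ := ContinuousLinearMap.le_opNorm _ _
          _ ≤ Real.exp (μ0 / 2) ^ n * ‖Y₀ ω‖ := by
              refine mul_le_mul_of_nonneg_right ((hbound n).trans ?_) (norm_nonneg _)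
              rw [← Real.exp_nat_mul]
              exact Real.exp_le_exp.2 hSn
      · simpa using (tendsto_pow_atTop_nhds_zero_of_lt_one (Real.exp_nonneg _)
          (Real.exp_lt_one_iff.2 (by linarith))).mul_const ‖Y₀ ω‖
    have hZt := hpart.add hrem
    rw [add_zero] at hZt
    exact hZt
  -- conclusion via dominated convergence
  have hU_tendsto : ∀ᵐ ω ∂ℙ, Tendsto (fun m => f (Z m ω)) atTop
      (𝓝 (f (∑' k : ℕ, (fwdProd A 1 k ω) (B (k + 1) ω)))) := by
    filter_upwards [hae] with ω hω
    exact (f.continuous.tendsto _).comp hω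
  have hgoal := tendsto_integral_of_dominated_convergence (μ := ℙ)
      (F := fun m ω => f (Z m ω))
      (f := fun ω => f (∑' k : ℕ, (fwdProd A 1 k ω) (B (k + 1) ω)))
      (fun _ => ‖f‖)
      (fun m => (f.continuous.measurable.comp (hZmeas m)).aestronglyMeasurable)
      (integrable_const _)
      (fun m => Eventually.of_forall fun ω => f.norm_coe_le_norm _)
      hU_tendsto
  have hfun : (fun m => ∫ ω, f (Y m ω) ∂ℙ) = fun m => ∫ ω, f (Z m ω) ∂ℙ := funext hint_eq
  rw [hfun]
  exact hgoal
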